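/- Let a ∈ W^α with α ≥ 2, a_j = a_{-j}, and define for s ∈ (0,π) the function b(t,s) = (a(t) − g(s)) e^{is} / ((t − e^{is})(t^{-1} − e^{is})), where g(s) = a(e^{is}). Then b(·, s) ∈ W^{α−2} and ‖b(·,s)‖_{α−2} ≤ C‖a‖_α with C independent of s ∈ (0,π). -/

import Mathlib

set_option maxHeartbeats 1000000
open Complex



noncomputable def uu (s : ℝ) (n : ℕ) : ℝ := Real.sin (n * s) / Real.sin s

lemma sin_nat_le (s : ℝ) (hs0 : 0 ≤ Real.sin s) : ∀ n : ℕ, |Real.sin (n * s)| ≤ n * Real.sin s := by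
  intro n
  induction n with
  | zero => simp
  | succ n ih =>
    push_cast
    have h : ((n:ℝ)+1) * s = n*s + s := by ring
    rw [h, Real.sin_add]
    have hc1 : |Real.cos s| ≤ 1 := Real.abs_cos_le_one s
    have hc2 : |Real.cos (↑n*s)| ≤ 1 := Real.abs_cos_le_one _
    have habs : |Real.sin s| = Real.sin s := abs_of_nonneg hs0
    calc |Real.sin (↑n*s) * Real.cos s + Real.cos (↑n*s) * Real.sin s|
        ≤ |Real.sin (↑n*s)| * |Real.cos s| + |Real.cos (↑n*s)| * |Real.sin s| := by
          rw [← abs_mul, ← abs_mul]; exact abs_add_le _ _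
      _ ≤ ((n:ℝ)+1) * Real.sin s := by
          nlinarith [ih, abs_nonneg (Real.sin (↑n*s)), abs_nonneg (Real.cos (↑n*s)), abs_nonneg (Real.cos s)]

lemma uu_abs (s : ℝ) (hs1 : 0 < s) (hs2 : s < Real.pi) (n : ℕ) : |uu s n| ≤ n := by
  have hp : 0 < Real.sin s := Real.sin_pos_of_pos_of_lt_pi hs1 hs2
  unfold uu
  rw [abs_div, abs_of_pos hp, div_le_iff₀ hp]
  exact sin_nat_le s hp.le n

lemma uu_rec (s : ℝ) (n : ℕ) :
    uu s n + uu s (n+2) = 2 * Real.cos s * uu s (n+1) := by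
  unfold uu
  rw [← add_div, ← mul_div_assoc]
  congr 1
  have h1 : ((n:ℝ)) * s = ((n:ℝ)+1)*s - s := by ring
  have h2 : ((n:ℝ)+2) * s = ((n:ℝ)+1)*s + s := by ring
  push_cast
  rw [h1, h2, Real.sin_add, Real.sin_sub]
  ring

lemma uu_sub (s : ℝ) (n : ℕ) (hs : Real.sin s ≠ 0) :
    uu s n - uu s (n+2) = -2 * Real.cos ((n+1)*s) := by
  unfold uu
  rw [div_sub_div_same]
  rw [div_eq_iff hs]
  have h1 : ((n:ℝ)) * s = ((n:ℝ)+1)*s - s := by ring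
  have h2 : ((n:ℝ)+2) * s = ((n:ℝ)+1)*s + s := by ring
  push_cast
  rw [h1, h2, Real.sin_add, Real.sin_sub]
  ring

lemma uu_zero (s : ℝ) : uu s 0 = 0 := by simp [uu]

lemma uu_one (s : ℝ) (hs : Real.sin s ≠ 0) : uu s 1 = 1 := by
  simp [uu, div_self hs]


lemma wt_one_le (α : ℝ) (hα : 0 ≤ α) (j : ℤ) : (1:ℝ) ≤ (1 + (|j| : ℝ)) ^ α := by
  have h0 : (0:ℝ) ≤ (|j|:ℝ) := by positivity
  have h1 : (1:ℝ) ≤ 1 + (|j|:ℝ) := by linarith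
  calc (1:ℝ) = (1 + (|j|:ℝ)) ^ (0:ℝ) := by rw [Real.rpow_zero]
    _ ≤ (1 + (|j|:ℝ)) ^ α := Real.rpow_le_rpow_of_exponent_le h1 hα

lemma hf1 (α : ℝ) (f : ℤ → ℂ) (hα : 0 ≤ α)
    (hf : Summable fun j : ℤ => ‖f j‖ * (1 + (|j| : ℝ)) ^ α) :
    Summable fun j : ℤ => ‖f j‖ := by
  apply Summable.of_nonneg_of_le (fun j => norm_nonneg _) (fun j => ?_) hf
  nlinarith [wt_one_le α hα j, norm_nonneg (f j)]

lemma hfw (α : ℝ) (f : ℤ → ℂ) (hα : 1 ≤ α)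
    (hf : Summable fun j : ℤ => ‖f j‖ * (1 + (|j| : ℝ)) ^ α) :
    Summable fun j : ℤ => ‖f j‖ * (1 + (|j| : ℝ)) := by
  apply Summable.of_nonneg_of_le (fun j => by positivity) (fun j => ?_) hf
  have h0 : (0:ℝ) ≤ (|j|:ℝ) := by positivity
  have h1 : (1:ℝ) ≤ 1 + (|j|:ℝ) := by linarith
  have h2 : (1 + (|j|:ℝ)) ≤ (1 + (|j|:ℝ)) ^ α := by
    calc (1 + (|j|:ℝ)) = (1 + (|j|:ℝ)) ^ (1:ℝ) := by rw [Real.rpow_one]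
      _ ≤ _ := Real.rpow_le_rpow_of_exponent_le h1 hα
  nlinarith [norm_nonneg (f j)]

lemma hM (α : ℝ) (f : ℤ → ℂ) (hα : 1 ≤ α)
    (hf : Summable fun j : ℤ => ‖f j‖ * (1 + (|j| : ℝ)) ^ α)
    (k : ℤ) (hk : 1 ≤ k) :
    Summable fun n : ℕ => ‖f (k + (n:ℤ))‖ * ((n:ℝ) + 1) := by
  have hinj : Function.Injective (fun n : ℕ => k + (n:ℤ)) := by
    intro a b h; simpa using h
  have h1 : Summable fun n : ℕ => ‖f (k + (n:ℤ))‖ * (1 + |((k + (n:ℤ) : ℤ) : ℝ)|) :=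
    (hfw α f hα hf).comp_injective hinj
  apply Summable.of_nonneg_of_le (fun n => by positivity) (fun n => ?_) h1
  have h2 : ((n:ℝ) + 1) ≤ 1 + |((k + (n:ℤ) : ℤ) : ℝ)| := by
    have h3 : (n:ℤ) + 1 ≤ |k + (n:ℤ)| := by
      rw [abs_of_pos (by omega)]; omega
    have h4 : ((n:ℝ)) + 1 ≤ ((|k + (n:ℤ)| : ℤ):ℝ) := by exact_mod_cast h3
    rw [← Int.cast_abs]
    linarith
  nlinarith [norm_nonneg (f (k + (n:ℤ)))]

lemma hsummand (α : ℝ) (f : ℤ → ℂ) (hα : 1 ≤ α)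
    (hf : Summable fun j : ℤ => ‖f j‖ * (1 + (|j| : ℝ)) ^ α)
    (k : ℤ) (hk : 1 ≤ k) (w : ℕ → ℂ) (hw : ∀ n, ‖w n‖ ≤ 2 * ((n:ℝ)+1)) :
    Summable fun n : ℕ => f (k + (n:ℤ)) * w n := by
  apply Summable.of_norm
  have hMs := (hM α f hα hf k hk).mul_left 2
  apply Summable.of_nonneg_of_le (fun n => norm_nonneg _) (fun n => ?_) hMs
  rw [norm_mul]
  calc ‖f (k+(n:ℤ))‖ * ‖w n‖ ≤ ‖f (k+(n:ℤ))‖ * (2 * ((n:ℝ)+1)) :=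
        mul_le_mul_of_nonneg_left (hw n) (norm_nonneg _)
    _ = 2 * (‖f (k+(n:ℤ))‖ * ((n:ℝ)+1)) := by ring

section
variable (α : ℝ) (f : ℤ → ℂ) (s : ℝ)

noncomputable def dd (f : ℤ → ℂ) (s : ℝ) (m : ℤ) : ℂ :=
  ∑' n : ℕ, f (|m| + 1 + (n:ℤ)) * ((uu s (n+1) : ℝ) : ℂ)

lemma dd_norm_le (hα : 1 ≤ α) (hf : Summable fun j : ℤ => ‖f j‖ * (1 + (|j| : ℝ)) ^ α)
    (hs1 : 0 < s) (hs2 : s < Real.pi) (m : ℤ) :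
    ‖dd f s m‖ ≤ ∑' n : ℕ, ‖f (|m| + 1 + (n:ℤ))‖ * ((n:ℝ) + 1) := by
  have hk : (1:ℤ) ≤ |m| + 1 := by have := abs_nonneg m; omega
  have hMs := hM α f hα hf (|m|+1) hk
  have hterm : ∀ n : ℕ, ‖f (|m| + 1 + (n:ℤ)) * ((uu s (n+1) : ℝ) : ℂ)‖ ≤
      ‖f (|m| + 1 + (n:ℤ))‖ * ((n:ℝ) + 1) := by
    intro n
    rw [norm_mul, Complex.norm_real, Real.norm_eq_abs]
    apply mul_le_mul_of_nonneg_left _ (norm_nonneg _)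
    have := uu_abs s hs1 hs2 (n+1)
    push_cast at this ⊢
    linarith
  have hsum : Summable fun n : ℕ => ‖f (|m| + 1 + (n:ℤ)) * ((uu s (n+1) : ℝ) : ℂ)‖ :=
    Summable.of_nonneg_of_le (fun n => norm_nonneg _) hterm hMs
  calc ‖dd f s m‖ ≤ ∑' n : ℕ, ‖f (|m| + 1 + (n:ℤ)) * ((uu s (n+1) : ℝ) : ℂ)‖ :=
        norm_tsum_le_tsum_norm hsum
    _ ≤ _ := Summable.tsum_le_tsum hterm hsum hMs

end

section
variable (α : ℝ) (f : ℤ → ℂ) (s : ℝ)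

noncomputable def PP (α : ℝ) (f : ℤ → ℂ) : ℤ × ℤ → ℝ :=
  fun p => if |p.2| < |p.1| then ‖f p.1‖ * (1 + (|p.1| : ℝ)) ^ (α - 1) else 0

lemma PP_nonneg : ∀ p, 0 ≤ PP α f p := by
  intro p; unfold PP; split
  · positivity
  · exact le_refl 0

lemma PP_fiber_summable (j : ℤ) : Summable fun m : ℤ => PP α f (j, m) := by
  apply summable_of_ne_finset_zero (s := Finset.Ioo (-|j|) |j|)
  intro m hm
  unfold PP
  rw [if_neg]
  simp only [Finset.mem_Ioo] at hm
  intro h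
  exact hm ⟨(abs_lt.1 h).1, (abs_lt.1 h).2⟩

lemma PP_fiber_le (j : ℤ) :
    ∑' m : ℤ, PP α f (j, m) ≤ 2 * (‖f j‖ * (1 + (|j| : ℝ)) ^ α) := by
  have hpos : (0:ℝ) < 1 + |(j:ℝ)| := by positivity
  have hsum : ∑' m : ℤ, PP α f (j, m) =
      ∑ m ∈ Finset.Ioo (-|j|) |j|, PP α f (j, m) := by
    apply tsum_eq_sum
    intro m hm
    unfold PP
    rw [if_neg]
    simp only [Finset.mem_Ioo] at hm
    intro h
    exact hm ⟨(abs_lt.1 h).1, (abs_lt.1 h).2⟩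
  rw [hsum]
  have hconst : ∀ m ∈ Finset.Ioo (-|j|) |j|, PP α f (j, m) =
      ‖f j‖ * (1 + (|j| : ℝ)) ^ (α - 1) := by
    intro m hm
    simp only [Finset.mem_Ioo] at hm
    unfold PP
    rw [if_pos (abs_lt.2 ⟨hm.1, hm.2⟩)]
  rw [Finset.sum_congr rfl hconst, Finset.sum_const, nsmul_eq_mul, Int.card_Ioo]
  have hcard : (((|j| - -|j| - 1).toNat : ℕ) : ℝ) ≤ 2 * (1 + |(j:ℝ)|) := by
    have h1 : (((|j| - -|j| - 1).toNat : ℤ)) ≤ 2 * (1 + |j|) := by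
      have := abs_nonneg j; omega
    calc (((|j| - -|j| - 1).toNat : ℕ) : ℝ) = (((|j| - -|j| - 1).toNat : ℤ) : ℝ) := by
          push_cast; ring
      _ ≤ ((2 * (1 + |j|) : ℤ) : ℝ) := by exact_mod_cast h1
      _ = 2 * (1 + |(j:ℝ)|) := by push_cast; ring
  have hrw : (1 + |(j:ℝ)|) ^ (α - 1) * (1 + |(j:ℝ)|) = (1 + |(j:ℝ)|) ^ α := by
    nth_rewrite 2 [← Real.rpow_one (1 + |(j:ℝ)|)]
    rw [← Real.rpow_add hpos]; ring_nf
  calc (((|j| - -|j| - 1).toNat : ℕ) : ℝ) * (‖f j‖ * (1 + (|j|:ℝ)) ^ (α-1))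
      ≤ (2 * (1 + |(j:ℝ)|)) * (‖f j‖ * (1 + (|j|:ℝ)) ^ (α-1)) := by
        apply mul_le_mul_of_nonneg_right hcard (by positivity)
    _ = 2 * (‖f j‖ * ((1 + (|j|:ℝ)) ^ (α-1) * (1 + |(j:ℝ)|))) := by ring
    _ = 2 * (‖f j‖ * (1 + (|j|:ℝ)) ^ α) := by rw [hrw]

end

section
variable (α : ℝ) (f : ℤ → ℂ) (s : ℝ)

lemma PP_summable (hf : Summable fun j : ℤ => ‖f j‖ * (1 + (|j| : ℝ)) ^ α) :
    Summable (PP α f) ∧ ∑' p, PP α f p ≤ 2 * ∑' j : ℤ, ‖f j‖ * (1 + (|j| : ℝ)) ^ α := by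
  have hfib : Summable fun j : ℤ => ∑' m : ℤ, PP α f (j, m) := by
    apply Summable.of_nonneg_of_le (fun j => tsum_nonneg (fun m => PP_nonneg α f _))
      (fun j => PP_fiber_le α f j) (hf.mul_left 2)
  have hS : Summable (PP α f) :=
    (summable_prod_of_nonneg (PP_nonneg α f)).2 ⟨fun j => PP_fiber_summable α f j, hfib⟩
  refine ⟨hS, ?_⟩
  rw [Summable.tsum_prod hS]
  calc ∑' j : ℤ, ∑' m : ℤ, PP α f (j, m)
      ≤ ∑' j : ℤ, 2 * (‖f j‖ * (1 + (|j| : ℝ)) ^ α) :=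
        Summable.tsum_le_tsum (fun j => PP_fiber_le α f j) hfib (hf.mul_left 2)
    _ = 2 * ∑' j : ℤ, ‖f j‖ * (1 + (|j| : ℝ)) ^ α := tsum_mul_left

noncomputable def GG (α : ℝ) (f : ℤ → ℂ) : ℤ × ℕ → ℝ :=
  fun q => ‖f (|q.1| + 1 + (q.2:ℤ))‖ * ((q.2:ℝ) + 1) * (1 + (|q.1| : ℝ)) ^ (α - 2)

def phi : ℤ × ℕ → ℤ × ℤ := fun q => (|q.1| + 1 + (q.2:ℤ), q.1)

lemma phi_inj : Function.Injective phi := by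
  intro a b h
  unfold phi at h
  have h2 : a.1 = b.1 := congrArg Prod.snd h
  have h1 : |a.1| + 1 + (a.2:ℤ) = |b.1| + 1 + (b.2:ℤ) := congrArg Prod.fst h
  rw [h2] at h1
  have : (a.2 : ℤ) = b.2 := by omega
  exact Prod.ext h2 (by exact_mod_cast this)

lemma GG_le_PP (hα : 2 ≤ α) (q : ℤ × ℕ) : GG α f q ≤ PP α f (phi q) := by
  obtain ⟨m, n⟩ := q
  unfold GG PP phi
  simp only
  have habs : |(|m| + 1 + (n:ℤ))| = |m| + 1 + (n:ℤ) :=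
    abs_of_pos (show (0:ℤ) < |m| + 1 + (n:ℤ) by have := abs_nonneg m; omega)
  have hj : |m| < |(|m| + 1 + (n:ℤ))| := by rw [habs]; omega
  rw [if_pos hj]
  have hc1 : ((n:ℝ) + 1) ≤ 1 + |((|m| + 1 + (n:ℤ) : ℤ) : ℝ)| := by
    have h1 : (n:ℤ) + 1 ≤ |(|m| + 1 + (n:ℤ))| := by rw [habs]; have := abs_nonneg m; omega
    have h2 : ((n:ℝ)) + 1 ≤ ((|(|m| + 1 + (n:ℤ))| : ℤ) : ℝ) := by exact_mod_cast h1
    rw [← Int.cast_abs]; linarith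
  have hc2 : (1 + (|m| : ℝ)) ≤ 1 + |((|m| + 1 + (n:ℤ) : ℤ) : ℝ)| := by
    have h1 : |m| ≤ |(|m| + 1 + (n:ℤ))| := by rw [habs]; omega
    have h2 : ((|m| : ℤ) : ℝ) ≤ ((|(|m| + 1 + (n:ℤ))| : ℤ) : ℝ) := by exact_mod_cast h1
    rw [← Int.cast_abs, ← Int.cast_abs]; linarith
  have hb1 : (0:ℝ) < 1 + (|m| : ℝ) := by
    rw [← Int.cast_abs]; have := abs_nonneg m; positivity
  have hb2 : (0:ℝ) < 1 + |((|m| + 1 + (n:ℤ) : ℤ) : ℝ)| := by positivity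
  have hc3 : (1 + (|m| : ℝ)) ^ (α - 2) ≤ (1 + |((|m| + 1 + (n:ℤ) : ℤ) : ℝ)|) ^ (α-2) :=
    Real.rpow_le_rpow hb1.le hc2 (by linarith)
  have hrw : (1 + |((|m| + 1 + (n:ℤ) : ℤ) : ℝ)|) * (1 + |((|m| + 1 + (n:ℤ) : ℤ) : ℝ)|) ^ (α-2)
      = (1 + |((|m| + 1 + (n:ℤ) : ℤ) : ℝ)|) ^ (α-1) := by
    nth_rewrite 1 [← Real.rpow_one (1 + |((|m| + 1 + (n:ℤ) : ℤ) : ℝ)|)]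
    rw [← Real.rpow_add hb2]; ring_nf
  calc ‖f (|m| + 1 + (n:ℤ))‖ * ((n:ℝ) + 1) * (1 + (|m| : ℝ)) ^ (α - 2)
      ≤ ‖f (|m| + 1 + (n:ℤ))‖ * (1 + |((|m| + 1 + (n:ℤ) : ℤ) : ℝ)|) *
          (1 + |((|m| + 1 + (n:ℤ) : ℤ) : ℝ)|) ^ (α-2) := by
        apply mul_le_mul
        · exact mul_le_mul_of_nonneg_left hc1 (norm_nonneg _)
        · exact hc3
        · positivity
        · positivity
    _ = ‖f (|m| + 1 + (n:ℤ))‖ * ((1 + |((|m| + 1 + (n:ℤ) : ℤ) : ℝ)|) *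
          (1 + |((|m| + 1 + (n:ℤ) : ℤ) : ℝ)|) ^ (α-2)) := by ring
    _ = ‖f (|m| + 1 + (n:ℤ))‖ * (1 + |((|m| + 1 + (n:ℤ) : ℤ) : ℝ)|) ^ (α-1) := by rw [hrw]

end

lemma dd_main (α : ℝ) (f : ℤ → ℂ) (s : ℝ) (hα : 2 ≤ α)
    (hf : Summable fun j : ℤ => ‖f j‖ * (1 + (|j| : ℝ)) ^ α)
    (hs1 : 0 < s) (hs2 : s < Real.pi) :
    Summable (fun m : ℤ => ‖dd f s m‖ * (1 + (|m| : ℝ)) ^ (α-2)) ∧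
    ∑' m : ℤ, ‖dd f s m‖ * (1 + (|m| : ℝ)) ^ (α-2) ≤
      2 * ∑' j : ℤ, ‖f j‖ * (1 + (|j| : ℝ)) ^ α := by
  have hα1 : 1 ≤ α := by linarith
  have hPP := PP_summable α f hf
  have hGnn : ∀ q, 0 ≤ GG α f q := by
    intro q; unfold GG; positivity
  have hGP : Summable (GG α f) := by
    apply Summable.of_nonneg_of_le hGnn (fun q => GG_le_PP α f hα q)
    exact hPP.1.comp_injective phi_inj
  have htGG : ∑' q, GG α f q ≤ ∑' p, PP α f p :=
    Summable.tsum_le_tsum_of_inj phi phi_inj (fun c _ => PP_nonneg α f c)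
      (fun q => GG_le_PP α f hα q) hGP hPP.1
  have hfib := (summable_prod_of_nonneg hGnn).1 hGP
  have hfib2 : Summable fun m : ℤ => ∑' n : ℕ, GG α f (m, n) := hfib.2
  have hpt : ∀ m : ℤ, ‖dd f s m‖ * (1 + (|m| : ℝ)) ^ (α-2) ≤ ∑' n : ℕ, GG α f (m, n) := by
    intro m
    have h1 : ∑' n : ℕ, GG α f (m, n) =
        (∑' n : ℕ, ‖f (|m| + 1 + (n:ℤ))‖ * ((n:ℝ) + 1)) * (1 + (|m| : ℝ)) ^ (α-2) := by
      rw [← tsum_mul_right]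
      rfl
    rw [h1]
    apply mul_le_mul_of_nonneg_right (dd_norm_le α f s hα1 hf hs1 hs2 m) (by positivity)
  constructor
  · exact Summable.of_nonneg_of_le (fun m => by positivity) hpt hfib2
  · calc ∑' m : ℤ, ‖dd f s m‖ * (1 + (|m| : ℝ)) ^ (α-2)
        ≤ ∑' m : ℤ, ∑' n : ℕ, GG α f (m, n) :=
          Summable.tsum_le_tsum hpt (Summable.of_nonneg_of_le (fun m => by positivity) hpt hfib2) hfib2
      _ = ∑' q, GG α f q := (Summable.tsum_prod hGP).symm
      _ ≤ ∑' p, PP α f p := htGG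
      _ ≤ 2 * ∑' j : ℤ, ‖f j‖ * (1 + (|j| : ℝ)) ^ α := hPP.2

lemma exp_cos (x : ℝ) :
    cexp (I*(x:ℂ)) + cexp (-(I*(x:ℂ))) = ((2*Real.cos x : ℝ) : ℂ) := by
  rw [show I*(x:ℂ) = (x:ℂ)*I by ring, show -((x:ℂ)*I) = ((-x:ℝ):ℂ)*I by push_cast; ring,
    Complex.exp_mul_I, Complex.exp_mul_I]
  push_cast [Complex.ofReal_cos, Complex.ofReal_sin]
  rw [Complex.cos_neg, Complex.sin_neg]
  ring

lemma norm_cexp_int (j : ℤ) (s : ℝ) : ‖cexp (I*(j:ℂ)*(s:ℂ))‖ = 1 := by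
  rw [Complex.norm_exp]
  simp [Complex.mul_re]

lemma dd_neg (f : ℤ → ℂ) (s : ℝ) (x : ℤ) : dd f s (-x) = dd f s x := by
  unfold dd; rw [abs_neg]

lemma coeffPos (α : ℝ) (f : ℤ → ℂ) (s : ℝ) (hα : 1 ≤ α)
    (hf : Summable fun j : ℤ => ‖f j‖ * (1 + (|j| : ℝ)) ^ α)
    (hs1 : 0 < s) (hs2 : s < Real.pi) (k : ℤ) (hk : 1 ≤ k) :
    dd f s (k-1) + dd f s (k+1) - 2*((Real.cos s : ℝ):ℂ)*dd f s k = f k := by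
  have hsin : Real.sin s ≠ 0 := (Real.sin_pos_of_pos_of_lt_pi hs1 hs2).ne'
  set cc : ℂ := ((Real.cos s : ℝ):ℂ) with hcc
  have hub : ∀ j : ℕ, ‖((uu s j : ℝ):ℂ)‖ ≤ (j:ℝ) := by
    intro j
    rw [Complex.norm_real, Real.norm_eq_abs]
    exact uu_abs s hs1 hs2 j
  have hA : Summable fun n : ℕ => f (k+1+(n:ℤ)) * ((uu s (n+2) : ℝ):ℂ) := by
    apply hsummand α f hα hf (k+1) (by omega)
    intro n
    calc ‖((uu s (n+2) : ℝ):ℂ)‖ ≤ ((n:ℝ)+2) := by have := hub (n+2); push_cast at this ⊢; linarith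
      _ ≤ 2*((n:ℝ)+1) := by linarith [Nat.cast_nonneg (α := ℝ) n]
  have hB : Summable fun n : ℕ => f (k+1+(n:ℤ)) * ((uu s n : ℝ):ℂ) := by
    apply hsummand α f hα hf (k+1) (by omega)
    intro n
    calc ‖((uu s n : ℝ):ℂ)‖ ≤ ((n:ℝ)) := hub n
      _ ≤ 2*((n:ℝ)+1) := by linarith [Nat.cast_nonneg (α := ℝ) n]
  have hC : Summable fun n : ℕ => f (k+1+(n:ℤ)) * ((uu s (n+1) : ℝ):ℂ) := by
    apply hsummand α f hα hf (k+1) (by omega)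
    intro n
    calc ‖((uu s (n+1) : ℝ):ℂ)‖ ≤ ((n:ℝ)+1) := by have := hub (n+1); push_cast at this ⊢; linarith
      _ ≤ 2*((n:ℝ)+1) := by linarith [Nat.cast_nonneg (α := ℝ) n]
  have hCk : Summable fun n : ℕ => f (k+(n:ℤ)) * ((uu s (n+1) : ℝ):ℂ) := by
    apply hsummand α f hα hf k hk
    intro n
    calc ‖((uu s (n+1) : ℝ):ℂ)‖ ≤ ((n:ℝ)+1) := by have := hub (n+1); push_cast at this ⊢; linarith
      _ ≤ 2*((n:ℝ)+1) := by linarith [Nat.cast_nonneg (α := ℝ) n]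
  -- step 1
  have step1 : dd f s (k-1) = f k * ((uu s 1 : ℝ):ℂ)
      + ∑' n : ℕ, f (k+1+(n:ℤ)) * ((uu s (n+2) : ℝ):ℂ) := by
    unfold dd
    have habs1 : |k - 1| = k - 1 := abs_of_nonneg (by omega)
    calc ∑' n : ℕ, f (|k-1| + 1 + (n:ℤ)) * ((uu s (n+1) : ℝ):ℂ)
        = ∑' n : ℕ, f (k + (n:ℤ)) * ((uu s (n+1) : ℝ):ℂ) := by
          apply tsum_congr; intro n; congr 2; rw [habs1]; ring
      _ = f (k + ((0:ℕ):ℤ)) * ((uu s (0+1) : ℝ):ℂ)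
          + ∑' n : ℕ, f (k + ((n+1:ℕ):ℤ)) * ((uu s ((n+1)+1) : ℝ):ℂ) := Summable.tsum_eq_zero_add hCk
      _ = f k * ((uu s 1 : ℝ):ℂ) + ∑' n : ℕ, f (k+1+(n:ℤ)) * ((uu s (n+2) : ℝ):ℂ) := by
          congr 1
          · norm_num
          · apply tsum_congr; intro n; congr 2; push_cast; ring
  -- step 2
  have step2 : dd f s (k+1) = ∑' n : ℕ, f (k+1+(n:ℤ)) * ((uu s n : ℝ):ℂ) := by
    unfold dd
    have habs2 : |k + 1| = k + 1 := abs_of_nonneg (by omega)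
    rw [Summable.tsum_eq_zero_add hB, uu_zero]
    simp only [Complex.ofReal_zero, mul_zero, zero_add]
    apply tsum_congr; intro n; congr 2; rw [habs2]; push_cast; ring
  -- step 3
  have step3 : dd f s k = ∑' n : ℕ, f (k+1+(n:ℤ)) * ((uu s (n+1) : ℝ):ℂ) := by
    unfold dd
    have habs0 : |k| = k := abs_of_nonneg (by omega)
    apply tsum_congr; intro n; congr 2; rw [habs0]
  rw [step1, step2, step3]
  have h2c : 2*cc*(∑' n : ℕ, f (k+1+(n:ℤ)) * ((uu s (n+1) : ℝ):ℂ))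
      = ∑' n : ℕ, 2*cc*(f (k+1+(n:ℤ)) * ((uu s (n+1) : ℝ):ℂ)) := tsum_mul_left.symm
  rw [h2c]
  have hzero : ∀ n : ℕ, f (k+1+(n:ℤ)) * ((uu s (n+2) : ℝ):ℂ)
      + f (k+1+(n:ℤ)) * ((uu s n : ℝ):ℂ)
      - 2*cc*(f (k+1+(n:ℤ)) * ((uu s (n+1) : ℝ):ℂ)) = 0 := by
    intro n
    have hr : uu s n + uu s (n+2) - 2*Real.cos s*uu s (n+1) = 0 := by
      have := uu_rec s n; linarith
    calc f (k+1+(n:ℤ)) * ((uu s (n+2) : ℝ):ℂ) + f (k+1+(n:ℤ)) * ((uu s n : ℝ):ℂ)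
        - 2*cc*(f (k+1+(n:ℤ)) * ((uu s (n+1) : ℝ):ℂ))
        = f (k+1+(n:ℤ)) * (((uu s n + uu s (n+2) - 2*Real.cos s*uu s (n+1) : ℝ)):ℂ) := by
          rw [hcc]; push_cast; ring
      _ = 0 := by rw [hr]; simp
  have hsum0 : (∑' n : ℕ, f (k+1+(n:ℤ)) * ((uu s (n+2) : ℝ):ℂ))
      + (∑' n : ℕ, f (k+1+(n:ℤ)) * ((uu s n : ℝ):ℂ))
      - (∑' n : ℕ, 2*cc*(f (k+1+(n:ℤ)) * ((uu s (n+1) : ℝ):ℂ))) = 0 := by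
    rw [← Summable.tsum_add hA hB, ← Summable.tsum_sub (hA.add hB) (hC.mul_left (2*cc))]
    calc _ = ∑' (_ : ℕ), (0:ℂ) := tsum_congr hzero
      _ = 0 := tsum_zero
  have hu1 : ((uu s 1:ℝ):ℂ) = 1 := by rw [uu_one s hsin]; simp
  rw [hu1]
  linear_combination hsum0

lemma Gsplit (α : ℝ) (f : ℤ → ℂ) (s : ℝ) (hα : 1 ≤ α)
    (hf : Summable fun j : ℤ => ‖f j‖ * (1 + (|j| : ℝ)) ^ α)
    (hsym : ∀ j : ℤ, f (-j) = f j) :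
    ∑' j : ℤ, f j * cexp (I*(j:ℂ)*(s:ℂ)) =
      f 0 + ∑' n : ℕ, f (1+(n:ℤ)) *
        (cexp (I*((n:ℂ)+1)*(s:ℂ)) + cexp (-(I*((n:ℂ)+1)*(s:ℂ)))) := by
  have hfabs : Summable fun j : ℤ => ‖f j‖ := hf1 α f (by linarith) hf
  have hnat : Summable fun n : ℕ => ‖f (n:ℤ)‖ :=
    hfabs.comp_injective (fun a b h => by simpa using h)
  have hneg : Summable fun n : ℕ => ‖f (-((n:ℤ)+1))‖ :=
    hfabs.comp_injective (fun a b h => by simpa using h)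
  have h1 : Summable fun n : ℕ => f (n:ℤ) * cexp (I*((n:ℤ):ℂ)*(s:ℂ)) := by
    apply Summable.of_norm
    apply hnat.congr
    intro n
    rw [norm_mul, norm_cexp_int, mul_one]
  have h2 : Summable fun n : ℕ => f (-((n:ℤ)+1)) * cexp (I*((-((n:ℤ)+1) : ℤ):ℂ)*(s:ℂ)) := by
    apply Summable.of_norm
    apply hneg.congr
    intro n
    rw [norm_mul, norm_cexp_int, mul_one]
  rw [tsum_of_nat_of_neg_add_one h1 h2, Summable.tsum_eq_zero_add h1]
  have e0 : f ((0:ℕ):ℤ) * cexp (I*(((0:ℕ):ℤ):ℂ)*(s:ℂ)) = f 0 := by norm_num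
  rw [e0, add_assoc]
  congr 1
  have h1' : Summable fun n : ℕ => f ((n:ℤ)+1) * cexp (I*(((n:ℤ)+1:ℤ):ℂ)*(s:ℂ)) := by
    have := (summable_nat_add_iff 1).2 h1
    apply this.congr
    intro n
    push_cast
    ring_nf
  have hexpnorm : ∀ n : ℕ, ‖cexp (-(I*(((n:ℤ)+1:ℤ):ℂ)*(s:ℂ)))‖ = 1 := by
    intro n
    rw [show -(I*(((n:ℤ)+1:ℤ):ℂ)*(s:ℂ)) = I * (((-((n:ℤ)+1)) : ℤ):ℂ) * (s:ℂ) by push_cast; ring]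
    exact norm_cexp_int _ s
  have hneg' : Summable fun n : ℕ => ‖f ((n:ℤ)+1)‖ := by
    apply hneg.congr; intro n; rw [hsym ((n:ℤ)+1)]
  have h2' : Summable fun n : ℕ => f ((n:ℤ)+1) * cexp (-(I*(((n:ℤ)+1:ℤ):ℂ)*(s:ℂ))) := by
    apply Summable.of_norm
    apply hneg'.congr
    intro n
    rw [norm_mul, hexpnorm n, mul_one]
  have eA : (∑' n : ℕ, f (((n+1:ℕ)):ℤ) * cexp (I*((((n+1:ℕ)):ℤ):ℂ)*(s:ℂ)))
      = ∑' n : ℕ, f ((n:ℤ)+1) * cexp (I*(((n:ℤ)+1:ℤ):ℂ)*(s:ℂ)) := by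
    apply tsum_congr; intro n
    have h1 : (((n+1:ℕ)):ℤ) = (n:ℤ)+1 := by push_cast; ring
    rw [h1]
  have eB : (∑' n : ℕ, f (-((n:ℤ)+1)) * cexp (I*((-((n:ℤ)+1) : ℤ):ℂ)*(s:ℂ)))
      = ∑' n : ℕ, f ((n:ℤ)+1) * cexp (-(I*(((n:ℤ)+1:ℤ):ℂ)*(s:ℂ))) := by
    apply tsum_congr; intro n
    rw [hsym ((n:ℤ)+1)]
    congr 1
    congr 1
    push_cast
    ring
  calc (∑' n : ℕ, f (((n+1:ℕ)):ℤ) * cexp (I*((((n+1:ℕ)):ℤ):ℂ)*(s:ℂ)))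
        + ∑' n : ℕ, f (-((n:ℤ)+1)) * cexp (I*((-((n:ℤ)+1) : ℤ):ℂ)*(s:ℂ))
      = (∑' n : ℕ, f ((n:ℤ)+1) * cexp (I*(((n:ℤ)+1:ℤ):ℂ)*(s:ℂ)))
        + ∑' n : ℕ, f ((n:ℤ)+1) * cexp (-(I*(((n:ℤ)+1:ℤ):ℂ)*(s:ℂ))) := by
        rw [eA, eB]
    _ = ∑' n : ℕ, (f ((n:ℤ)+1) * cexp (I*(((n:ℤ)+1:ℤ):ℂ)*(s:ℂ))
        + f ((n:ℤ)+1) * cexp (-(I*(((n:ℤ)+1:ℤ):ℂ)*(s:ℂ)))) := (Summable.tsum_add h1' h2').symm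
    _ = ∑' n : ℕ, f (1+(n:ℤ)) *
        (cexp (I*((n:ℂ)+1)*(s:ℂ)) + cexp (-(I*((n:ℂ)+1)*(s:ℂ)))) := by
        apply tsum_congr; intro n
        rw [show (1:ℤ)+(n:ℤ) = (n:ℤ)+1 by ring]
        rw [show (((n:ℤ)+1:ℤ):ℂ) = ((n:ℂ)+1) by push_cast; ring]
        ring

lemma coeffZero (α : ℝ) (f : ℤ → ℂ) (s : ℝ) (hα : 1 ≤ α)
    (hf : Summable fun j : ℤ => ‖f j‖ * (1 + (|j| : ℝ)) ^ α)
    (hsym : ∀ j : ℤ, f (-j) = f j)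
    (hs1 : 0 < s) (hs2 : s < Real.pi) :
    dd f s (-1) + dd f s 1 - 2*((Real.cos s : ℝ):ℂ)*dd f s 0
      = f 0 - ∑' j : ℤ, f j * cexp (I*(j:ℂ)*(s:ℂ)) := by
  have hsin : Real.sin s ≠ 0 := (Real.sin_pos_of_pos_of_lt_pi hs1 hs2).ne'
  set cc : ℂ := ((Real.cos s : ℝ):ℂ) with hcc
  have hub : ∀ j : ℕ, ‖((uu s j : ℝ):ℂ)‖ ≤ (j:ℝ) := by
    intro j
    rw [Complex.norm_real, Real.norm_eq_abs]
    exact uu_abs s hs1 hs2 j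
  have hB0 : Summable fun n : ℕ => f (1+(n:ℤ)) * ((uu s n : ℝ):ℂ) := by
    apply hsummand α f hα hf 1 le_rfl
    intro n
    calc ‖((uu s n : ℝ):ℂ)‖ ≤ ((n:ℝ)) := hub n
      _ ≤ 2*((n:ℝ)+1) := by linarith [Nat.cast_nonneg (α := ℝ) n]
  have hC0 : Summable fun n : ℕ => f (1+(n:ℤ)) * ((uu s (n+1) : ℝ):ℂ) := by
    apply hsummand α f hα hf 1 le_rfl
    intro n
    calc ‖((uu s (n+1) : ℝ):ℂ)‖ ≤ ((n:ℝ)+1) := by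
          have := hub (n+1); push_cast at this ⊢; linarith
      _ ≤ 2*((n:ℝ)+1) := by linarith [Nat.cast_nonneg (α := ℝ) n]
  -- steps
  have dd1 : dd f s 1 = ∑' n : ℕ, f (1+(n:ℤ)) * ((uu s n : ℝ):ℂ) := by
    unfold dd
    rw [Summable.tsum_eq_zero_add hB0, uu_zero]
    simp only [Complex.ofReal_zero, mul_zero, zero_add]
    apply tsum_congr; intro n; congr 2; simp only [abs_one]; push_cast; ring
  have dd0 : dd f s 0 = ∑' n : ℕ, f (1+(n:ℤ)) * ((uu s (n+1) : ℝ):ℂ) := by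
    unfold dd
    apply tsum_congr; intro n; congr 2
  have ddm1 : dd f s (-1) = dd f s 1 := dd_neg f s 1
  rw [ddm1, dd1, dd0, Gsplit α f s hα hf hsym]
  have h2c : 2*cc*(∑' n : ℕ, f (1+(n:ℤ)) * ((uu s (n+1) : ℝ):ℂ))
      = ∑' n : ℕ, 2*cc*(f (1+(n:ℤ)) * ((uu s (n+1) : ℝ):ℂ)) := tsum_mul_left.symm
  rw [h2c, ← Summable.tsum_add hB0 hB0, ← Summable.tsum_sub (hB0.add hB0) (hC0.mul_left (2*cc))]
  have hterm : ∀ n : ℕ, f (1+(n:ℤ)) * ((uu s n : ℝ):ℂ) + f (1+(n:ℤ)) * ((uu s n : ℝ):ℂ)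
      - 2*cc*(f (1+(n:ℤ)) * ((uu s (n+1) : ℝ):ℂ))
      = -(f (1+(n:ℤ)) * (cexp (I*((n:ℂ)+1)*(s:ℂ)) + cexp (-(I*((n:ℂ)+1)*(s:ℂ))))) := by
    intro n
    have hr : 2*uu s n - 2*Real.cos s*uu s (n+1) = -(2*Real.cos (((n:ℝ)+1)*s)) := by
      have h1 := uu_rec s n
      have h2 := uu_sub s n hsin
      push_cast at h2
      linarith
    have hx : I*((n:ℂ)+1)*(s:ℂ) = I*((((n:ℝ)+1)*s : ℝ):ℂ) := by push_cast; ring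
    calc f (1+(n:ℤ)) * ((uu s n : ℝ):ℂ) + f (1+(n:ℤ)) * ((uu s n : ℝ):ℂ)
        - 2*cc*(f (1+(n:ℤ)) * ((uu s (n+1) : ℝ):ℂ))
        = f (1+(n:ℤ)) * (((2*uu s n - 2*Real.cos s*uu s (n+1) : ℝ)):ℂ) := by
          rw [hcc]; push_cast; ring
      _ = f (1+(n:ℤ)) * (((-(2*Real.cos (((n:ℝ)+1)*s)) : ℝ)):ℂ) := by rw [hr]
      _ = -(f (1+(n:ℤ)) * (((2*Real.cos (((n:ℝ)+1)*s) : ℝ)):ℂ)) := by push_cast; ring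
      _ = -(f (1+(n:ℤ)) * (cexp (I*((((n:ℝ)+1)*s : ℝ):ℂ)) + cexp (-(I*((((n:ℝ)+1)*s : ℝ):ℂ))))) := by
          rw [exp_cos]
      _ = -(f (1+(n:ℤ)) * (cexp (I*((n:ℂ)+1)*(s:ℂ)) + cexp (-(I*((n:ℂ)+1)*(s:ℂ))))) := by
          rw [hx]
  rw [tsum_congr hterm, tsum_neg]
  ring

lemma coeffNeg (α : ℝ) (f : ℤ → ℂ) (s : ℝ) (hα : 1 ≤ α)
    (hf : Summable fun j : ℤ => ‖f j‖ * (1 + (|j| : ℝ)) ^ α)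
    (hsym : ∀ j : ℤ, f (-j) = f j)
    (hs1 : 0 < s) (hs2 : s < Real.pi) (k : ℤ) (hk : k ≤ -1) :
    dd f s (k-1) + dd f s (k+1) - 2*((Real.cos s : ℝ):ℂ)*dd f s k = f k := by
  have h1 : dd f s (k-1) = dd f s ((-k)+1) := by
    rw [← dd_neg f s ((-k)+1)]; congr 1; ring
  have h2 : dd f s (k+1) = dd f s ((-k)-1) := by
    rw [← dd_neg f s ((-k)-1)]; congr 1; ring
  have h3 : dd f s k = dd f s (-k) := by
    rw [← dd_neg f s (-k)]; congr 1; ring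
  rw [h1, h2, h3]
  have hp := coeffPos α f s hα hf hs1 hs2 (-k) (by omega)
  rw [hsym k] at hp
  linear_combination hp

theorem stmt9 (α : ℝ) (hα : 2 ≤ α) (f : ℤ → ℂ)
    (hf : Summable fun j : ℤ => ‖f j‖ * (1 + (|j| : ℝ)) ^ α)
    (hsym : ∀ j : ℤ, f (-j) = f j) :
    ∃ C > 0, ∀ s : ℝ, s ∈ Set.Ioo 0 Real.pi →
      ∃ c : ℤ → ℂ,
        (Summable fun j : ℤ => ‖c j‖ * (1 + (|j| : ℝ)) ^ (α - 2)) ∧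
        (∑' j : ℤ, ‖c j‖ * (1 + (|j| : ℝ)) ^ (α - 2) ≤
          C * ∑' j : ℤ, ‖f j‖ * (1 + (|j| : ℝ)) ^ α) ∧
        (∀ t : ℂ, ‖t‖ = 1 → t ≠ Complex.exp (Complex.I * (s : ℂ)) →
            t ≠ Complex.exp (-(Complex.I * (s : ℂ))) →
          ∑' j : ℤ, c j * t ^ j =
            ((∑' j : ℤ, f j * t ^ j) -
                ∑' j : ℤ, f j * Complex.exp (Complex.I * (j : ℂ) * (s : ℂ))) *
              Complex.exp (Complex.I * (s : ℂ)) /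
              ((t - Complex.exp (Complex.I * (s : ℂ))) *
                (t⁻¹ - Complex.exp (Complex.I * (s : ℂ))))) := by
  refine ⟨2, by norm_num, ?_⟩
  intro s hs
  obtain ⟨hs1, hs2⟩ := hs
  have hα1 : (1:ℝ) ≤ α := by linarith
  have main := dd_main α f s hα hf hs1 hs2
  refine ⟨fun m => -dd f s m, ?_, ?_, ?_⟩
  · simpa only [norm_neg] using main.1
  · simpa only [norm_neg] using main.2
  · intro t ht ht1 ht2
    have ht0 : t ≠ 0 := by
      intro h; rw [h] at ht; simp at ht
    have hzp : ∀ m : ℤ, ‖t^m‖ = 1 := fun m => by rw [norm_zpow, ht, one_zpow]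
    have hDn : Summable fun m : ℤ => ‖dd f s m‖ := by
      apply Summable.of_nonneg_of_le (fun m => norm_nonneg _) (fun m => ?_) main.1
      calc ‖dd f s m‖ = ‖dd f s m‖ * 1 := (mul_one _).symm
        _ ≤ ‖dd f s m‖ * (1+(|m|:ℝ))^(α-2) :=
            mul_le_mul_of_nonneg_left (wt_one_le (α-2) (by linarith) m) (norm_nonneg _)
    have hS : Summable fun m : ℤ => dd f s m * t^m := by
      apply Summable.of_norm
      apply hDn.congr
      intro m
      rw [norm_mul, hzp, mul_one]
    have hS1 : Summable fun m : ℤ => dd f s (m-1) * t^m := by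
      apply Summable.of_norm
      have hD1 : Summable fun m : ℤ => ‖dd f s (m-1)‖ :=
        ((Equiv.subRight (1:ℤ)).summable_iff (f := fun x => ‖dd f s x‖)).2 hDn
      apply hD1.congr
      intro m
      rw [norm_mul, hzp, mul_one]
    have hS2 : Summable fun m : ℤ => dd f s (m+1) * t^m := by
      apply Summable.of_norm
      have hD2 : Summable fun m : ℤ => ‖dd f s (m+1)‖ :=
        ((Equiv.addRight (1:ℤ)).summable_iff (f := fun x => ‖dd f s x‖)).2 hDn
      apply hD2.congr
      intro m
      rw [norm_mul, hzp, mul_one]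
    have hfT : Summable fun m : ℤ => f m * t^m := by
      apply Summable.of_norm
      apply (hf1 α f (by linarith) hf).congr
      intro m
      rw [norm_mul, hzp, mul_one]
    set G := ∑' j : ℤ, f j * cexp (I*(j:ℂ)*(s:ℂ)) with hGdef
    have hfun : (fun m : ℤ => (if m = 0 then G else 0) * t^m)
        = fun m : ℤ => if m = 0 then G else 0 := by
      funext m
      by_cases h : m = 0
      · subst h; simp
      · simp [h]
    have hIte : Summable fun m : ℤ => (if m = 0 then G else 0) * t^m := by
      rw [hfun]; exact (hasSum_ite_eq 0 G).summable
    have eqA : ∑' m : ℤ, dd f s m * t^m * t = ∑' m : ℤ, dd f s (m-1) * t^m := by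
      rw [← Equiv.tsum_eq (Equiv.addRight (1:ℤ)) (fun m => dd f s (m-1) * t^m)]
      apply tsum_congr
      intro m
      show dd f s m * t^m * t = dd f s (m+1-1) * t^(m+1)
      rw [show m+1-1 = m from by ring, zpow_add_one₀ ht0, mul_assoc]
    have eqB : ∑' m : ℤ, dd f s m * t^m * t⁻¹ = ∑' m : ℤ, dd f s (m+1) * t^m := by
      rw [← Equiv.tsum_eq (Equiv.subRight (1:ℤ)) (fun m => dd f s (m+1) * t^m)]
      apply tsum_congr
      intro m
      show dd f s m * t^m * t⁻¹ = dd f s (m-1+1) * t^(m-1)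
      rw [show m-1+1 = m from by ring, zpow_sub_one₀ ht0, mul_assoc]
    have hcoeff : ∀ m : ℤ, dd f s (m-1) + dd f s (m+1) - 2*((Real.cos s : ℝ):ℂ)*dd f s m
        = f m - (if m = 0 then G else 0) := by
      intro m
      rcases lt_trichotomy m 0 with h|h|h
      · rw [if_neg (by omega), coeffNeg α f s hα1 hf hsym hs1 hs2 m (by omega), sub_zero]
      · subst h
        rw [if_pos rfl]
        simpa using coeffZero α f s hα1 hf hsym hs1 hs2
      · rw [if_neg (by omega), coeffPos α f s hα1 hf hs1 hs2 m (by omega), sub_zero]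
    have key : (∑' m : ℤ, dd f s m * t^m) * (t + t⁻¹ - 2*((Real.cos s : ℝ):ℂ))
        = (∑' j : ℤ, f j * t^j) - G := by
      calc (∑' m : ℤ, dd f s m * t^m) * (t + t⁻¹ - 2*((Real.cos s : ℝ):ℂ))
          = (∑' m : ℤ, dd f s m * t^m) * t + (∑' m : ℤ, dd f s m * t^m) * t⁻¹
            - 2*((Real.cos s : ℝ):ℂ) * (∑' m : ℤ, dd f s m * t^m) := by ring
        _ = (∑' m : ℤ, dd f s m * t^m * t) + (∑' m : ℤ, dd f s m * t^m * t⁻¹)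
            - ∑' m : ℤ, 2*((Real.cos s : ℝ):ℂ)*(dd f s m * t^m) := by
            rw [tsum_mul_right, tsum_mul_right, tsum_mul_left]
        _ = (∑' m : ℤ, dd f s (m-1) * t^m) + (∑' m : ℤ, dd f s (m+1) * t^m)
            - ∑' m : ℤ, 2*((Real.cos s : ℝ):ℂ)*(dd f s m * t^m) := by
            rw [eqA, eqB]
        _ = ∑' m : ℤ, (dd f s (m-1) * t^m + dd f s (m+1) * t^m
            - 2*((Real.cos s : ℝ):ℂ)*(dd f s m * t^m)) := by
            rw [← Summable.tsum_add hS1 hS2, ← Summable.tsum_sub (hS1.add hS2) (hS.mul_left (2*((Real.cos s : ℝ):ℂ)))]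
        _ = ∑' m : ℤ, (f m * t^m - (if m = 0 then G else 0) * t^m) := by
            apply tsum_congr
            intro m
            have := hcoeff m
            calc dd f s (m-1) * t^m + dd f s (m+1) * t^m
                - 2*((Real.cos s : ℝ):ℂ)*(dd f s m * t^m)
                = (dd f s (m-1) + dd f s (m+1) - 2*((Real.cos s : ℝ):ℂ)*dd f s m) * t^m := by
                  ring
              _ = (f m - (if m = 0 then G else 0)) * t^m := by rw [this]
              _ = f m * t^m - (if m = 0 then G else 0) * t^m := by ring
        _ = (∑' m : ℤ, f m * t^m) - ∑' m : ℤ, (if m = 0 then G else 0) * t^m :=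
            Summable.tsum_sub hfT hIte
        _ = (∑' j : ℤ, f j * t^j) - G := by
            rw [hfun, show (∑' m : ℤ, if m = 0 then G else 0) = G from tsum_ite_eq (0:ℤ) (fun _ => G)]
    -- final algebra
    have hE0 : cexp (I*(s:ℂ)) ≠ 0 := Complex.exp_ne_zero _
    have hEinv : cexp (-(I*(s:ℂ))) = (cexp (I*(s:ℂ)))⁻¹ := Complex.exp_neg _
    have h2cE : cexp (I*(s:ℂ)) + (cexp (I*(s:ℂ)))⁻¹ = 2*((Real.cos s : ℝ):ℂ) := by
      rw [← hEinv, exp_cos s]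
      push_cast
      ring
    have hEE : cexp (I*(s:ℂ)) * (cexp (I*(s:ℂ)))⁻¹ = 1 := mul_inv_cancel₀ hE0
    have htt : t * t⁻¹ = 1 := mul_inv_cancel₀ ht0
    have hden : (t - cexp (I*(s:ℂ))) * (t⁻¹ - cexp (I*(s:ℂ)))
        = cexp (I*(s:ℂ)) * (2*((Real.cos s : ℝ):ℂ) - t - t⁻¹) := by
      linear_combination htt + cexp (I*(s:ℂ)) * h2cE - hEE
    have ht2' : t⁻¹ ≠ cexp (I*(s:ℂ)) := by
      intro h
      apply ht2
      rw [hEinv, ← h, inv_inv]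
    have hd0 : 2*((Real.cos s : ℝ):ℂ) - t - t⁻¹ ≠ 0 := by
      intro h
      exact (mul_ne_zero (sub_ne_zero.2 ht1) (sub_ne_zero.2 ht2'))
        (by rw [hden, h, mul_zero])
    have hLHS : ∑' j : ℤ, (fun m => -dd f s m) j * t^j = -(∑' m : ℤ, dd f s m * t^m) := by
      rw [← tsum_neg]
      apply tsum_congr
      intro m
      show -dd f s m * t^m = -(dd f s m * t^m)
      ring
    rw [hLHS, hden, eq_div_iff (mul_ne_zero hE0 hd0)]
    linear_combination cexp (I*(s:ℂ)) * key
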